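/- For every ν ∈ ℕ₀, every m ∈ ℤ and every t ∈ ℝ, the Matérn–Laguerre function satisfies the uniform bound |ψ_{m,ν}(t)| ≤ 2^ν ν! / √((2ν)!). -/

import Mathlib

open Real Finset

/-- The `m`-th Laguerre polynomial `L_m(x) = ∑_{k=0}^m C(m,k)(−1)^k x^k/k!`. -/
noncomputable def lagPoly (m : ℕ) (x : ℝ) : ℝ :=
  ∑ k ∈ Finset.range (m + 1), (Nat.choose m k : ℝ) * (-1) ^ k / (Nat.factorial k : ℝ) * x ^ k

/-- The Laguerre functions `φ_m`, `m ∈ ℤ`. -/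
noncomputable def lagFun (m : ℤ) (t : ℝ) : ℝ :=
  if 0 ≤ m then
    Set.indicator (Set.Ici (0 : ℝ))
      (fun s => Real.sqrt 2 * lagPoly m.toNat (2 * s) * Real.exp (-s)) t
  else
    Set.indicator (Set.Iio (0 : ℝ))
      (fun s => -(Real.sqrt 2 * lagPoly (-m - 1).toNat (-(2 * s)) * Real.exp s)) t

/-- The Matérn–Laguerre function `ψ_{m,ν}`. -/
noncomputable def maternLag (ν : ℕ) (m : ℤ) (t : ℝ) : ℝ :=
  (1 / Real.sqrt 2) * ((Nat.factorial ν : ℝ) / Real.sqrt (Nat.factorial (2 * ν))) *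
    ∑ k ∈ Finset.range (ν + 2),
      (Nat.choose (ν + 1) k : ℝ) * (-1) ^ k * lagFun (m + (k : ℤ)) t

/-! ### Auxiliary material -/

section ChoosePow
variable {𝕜 : Type*} [NormedField 𝕜] [HasSummableGeomSeries 𝕜]

lemma hasSum_choose_pow {z : 𝕜} (hz : ‖z‖ < 1) (k : ℕ) :
    HasSum (fun n : ℕ => (n.choose k : 𝕜) * z ^ n) (z ^ k * ((1 - z)⁻¹) ^ (k + 1)) := by
  have h := (hasSum_choose_mul_geometric_of_norm_lt_one' k hz).mul_left (z ^ k)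
  have h2 : HasSum (fun n : ℕ => (((n + k).choose k : 𝕜)) * z ^ (n + k))
      (z ^ k * Ring.inverse (1 - z) ^ (k + 1)) := by
    refine h.congr_fun fun n => ?_
    rw [pow_add]; ring
  rw [hasSum_nat_add_iff (f := fun n : ℕ => (n.choose k : 𝕜) * z ^ n) k] at h2
  have hs : ∑ i ∈ Finset.range k, (i.choose k : 𝕜) * z ^ i = 0 := by
    apply Finset.sum_eq_zero
    intro i hi
    rw [Nat.choose_eq_zero_of_lt (Finset.mem_range.mp hi)]
    simp
  rw [hs, add_zero, Ring.inverse_eq_inv'] at h2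
  exact h2
end ChoosePow

section GenFun

variable (x : ℝ) {z : ℂ}

private noncomputable def gg (x : ℝ) (z : ℂ) : ℕ × ℕ → ℂ :=
  fun p => (p.2.choose p.1 : ℂ) * (-(x:ℂ)) ^ p.1 / (p.1.factorial : ℂ) * z ^ p.2

lemma summable_gg (hz : ‖z‖ < 1) : Summable (gg x z) := by
  have hs0 : (0:ℝ) ≤ ‖z‖ := norm_nonneg z
  have hs1 : ‖(‖z‖)‖ < 1 := by rwa [Real.norm_eq_abs, abs_of_nonneg hs0]
  apply Summable.of_norm
  have hnorm : ∀ p : ℕ × ℕ, ‖gg x z p‖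
      = (p.2.choose p.1 : ℝ) * |x| ^ p.1 / (p.1.factorial : ℝ) * ‖z‖ ^ p.2 := by
    intro p
    simp [gg, norm_mul, norm_div, norm_pow, abs_of_nonneg]
  rw [show (fun p : ℕ × ℕ => ‖gg x z p‖) =
      (fun p : ℕ × ℕ => (p.2.choose p.1 : ℝ) * |x| ^ p.1 / (p.1.factorial : ℝ) * ‖z‖ ^ p.2)
      from funext hnorm]
  rw [summable_prod_of_nonneg]
  · constructor
    · intro k
      have := ((hasSum_choose_pow (𝕜 := ℝ) hs1 k).summable.mul_left
        (|x| ^ k / (k.factorial : ℝ)))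
      refine this.congr fun n => ?_
      ring
    · have key : ∀ k : ℕ, ∑' n : ℕ, (n.choose k : ℝ) * |x| ^ k / (k.factorial : ℝ) * ‖z‖ ^ n
          = (1 - ‖z‖)⁻¹ * ((|x| * ‖z‖ * (1 - ‖z‖)⁻¹) ^ k / (k.factorial : ℝ)) := by
        intro k
        have h1 := ((hasSum_choose_pow (𝕜 := ℝ) hs1 k).mul_left
          (|x| ^ k / (k.factorial : ℝ)))
        have h2 : HasSum (fun n : ℕ => (n.choose k : ℝ) * |x| ^ k / (k.factorial : ℝ) * ‖z‖ ^ n)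
            (|x| ^ k / (k.factorial : ℝ) * (‖z‖ ^ k * ((1 - ‖z‖)⁻¹) ^ (k + 1))) :=
          h1.congr_fun fun n => by ring
        rw [h2.tsum_eq]
        rw [mul_pow, mul_pow, pow_succ]
        ring
      rw [show (fun k : ℕ => ∑' n : ℕ, (n.choose k : ℝ) * |x| ^ k / (k.factorial : ℝ) * ‖z‖ ^ n)
          = (fun k : ℕ => (1 - ‖z‖)⁻¹ * ((|x| * ‖z‖ * (1 - ‖z‖)⁻¹) ^ k / (k.factorial : ℝ)))
          from funext key]
      exact ((Real.summable_pow_div_factorial _).mul_left _)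
  · intro p
    positivity

lemma hasSum_gg_fiber (hz : ‖z‖ < 1) (k : ℕ) :
    HasSum (fun n => gg x z (k, n))
      ((1 - z)⁻¹ * ((-(x:ℂ) * z * (1 - z)⁻¹) ^ k / (k.factorial : ℂ))) := by
  have h := (hasSum_choose_pow hz k).mul_left ((-(x:ℂ)) ^ k / (k.factorial : ℂ))
  have heq : (-(x:ℂ)) ^ k / (k.factorial : ℂ) * (z ^ k * ((1 - z)⁻¹) ^ (k + 1))
      = (1 - z)⁻¹ * ((-(x:ℂ) * z * (1 - z)⁻¹) ^ k / (k.factorial : ℂ)) := by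
    rw [mul_pow, mul_pow, pow_succ]
    ring
  rw [heq] at h
  refine h.congr_fun fun n => ?_
  simp only [gg]
  ring

lemma hasSum_lagPoly_mul_pow (hz : ‖z‖ < 1) :
    HasSum (fun n : ℕ => (lagPoly n x : ℂ) * z ^ n)
      ((1 - z)⁻¹ * Complex.exp (-(x:ℂ) * z * (1 - z)⁻¹)) := by
  have hg := summable_gg x hz
  have hT := hg.hasSum.prod_fiberwise (hasSum_gg_fiber x hz)
  have hexp : HasSum (fun k : ℕ => (-(x:ℂ) * z * (1 - z)⁻¹) ^ k / (k.factorial : ℂ))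
      (Complex.exp (-(x:ℂ) * z * (1 - z)⁻¹)) := by
    rw [Complex.exp_eq_exp_ℂ]
    exact NormedSpace.expSeries_div_hasSum_exp _
  have hTval : (∑' p, gg x z p) = (1 - z)⁻¹ * Complex.exp (-(x:ℂ) * z * (1 - z)⁻¹) :=
    hT.unique (hexp.mul_left _)
  have hswap : HasSum (fun p : ℕ × ℕ => gg x z (p.2, p.1)) (∑' p, gg x z p) :=
    ((Equiv.prodComm ℕ ℕ).hasSum_iff (f := gg x z)).2 hg.hasSum
  have hfib2 : ∀ n : ℕ, HasSum (fun k => gg x z (k, n)) ((lagPoly n x : ℂ) * z ^ n) := by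
    intro n
    have hsupp : ∀ k ∉ Finset.range (n + 1), gg x z (k, n) = 0 := by
      intro k hk
      simp only [Finset.mem_range, not_lt] at hk
      simp [gg, Nat.choose_eq_zero_of_lt (by omega : n < k)]
    have := hasSum_sum_of_ne_finset_zero (L := SummationFilter.unconditional ℕ) hsupp
    convert this using 1
    simp only [gg, lagPoly]
    push_cast
    rw [Finset.sum_mul]
    refine Finset.sum_congr rfl fun k _ => ?_
    ring
  have := hswap.prod_fiberwise hfib2
  rwa [hTval] at this

lemma summable_lagPoly_mul_pow (hz : ‖z‖ < 1) :
    Summable (fun n : ℕ => (lagPoly n x : ℂ) * z ^ n) :=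
  (hasSum_lagPoly_mul_pow x hz).summable

end GenFun

lemma abs_lagPoly_le {x : ℝ} (hx : 0 ≤ x) (n : ℕ) : |lagPoly n x| ≤ lagPoly n (-x) := by
  unfold lagPoly
  refine (Finset.abs_sum_le_sum_abs _ _).trans (Finset.sum_le_sum fun k _ => ?_)
  rw [abs_mul, abs_div, abs_mul, abs_pow, abs_pow, abs_neg, abs_one, one_pow, mul_one,
    abs_of_nonneg hx, Nat.abs_cast, Nat.abs_cast]
  have h1 : ((-1 : ℝ)) ^ k * (-x) ^ k = x ^ k := by
    rw [← mul_pow]; norm_num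
  calc (n.choose k : ℝ) / (k.factorial : ℝ) * x ^ k
      = (n.choose k : ℝ) * (-1) ^ k / (k.factorial : ℝ) * (-x) ^ k := by
        field_simp
        rw [mul_assoc, h1]
    _ ≤ _ := le_refl _

section Circle

variable {r : ℝ}

noncomputable def zf (r θ : ℝ) : ℂ := (r : ℂ) * Complex.exp (θ * Complex.I)

lemma norm_zf (hr : 0 ≤ r) (θ : ℝ) : ‖zf r θ‖ = r := by
  rw [zf, norm_mul, Complex.norm_real, Real.norm_eq_abs,
    Complex.norm_exp_ofReal_mul_I, abs_of_nonneg hr, mul_one]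

lemma zf_ne_zero (hr : 0 < r) (θ : ℝ) : zf r θ ≠ 0 := by
  simp [zf, Complex.exp_ne_zero, hr.ne']

lemma one_sub_zf_ne_zero (hr0 : 0 ≤ r) (hr1 : r < 1) (θ : ℝ) : (1 : ℂ) - zf r θ ≠ 0 := by
  intro h
  rw [sub_eq_zero] at h
  have := norm_zf hr0 θ
  rw [← h] at this
  simp at this
  linarith

lemma zf_zpow (hr : 0 < r) (j : ℤ) (θ : ℝ) :
    zf r θ ^ j = (r : ℂ) ^ j * Complex.exp ((j * Complex.I) * θ) := by
  rw [zf, mul_zpow, ← Complex.exp_int_mul]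
  norm_num
  left
  push_cast
  ring

lemma continuous_zf : Continuous (zf r) := by
  unfold zf; continuity

lemma integral_zf_zpow (hr : 0 < r) (j : ℤ) :
    (∫ θ in (0:ℝ)..(2 * Real.pi), zf r θ ^ j) = if j = 0 then (2 * Real.pi : ℂ) else 0 := by
  by_cases hj : j = 0
  · subst hj
    simp [Complex.real_smul]
  · rw [if_neg hj]
    have h1 : (fun θ : ℝ => zf r θ ^ j)
        = fun θ : ℝ => (r : ℂ) ^ j * Complex.exp (((j : ℂ) * Complex.I) * θ) :=
      funext (zf_zpow hr j)
    have hc : ((j : ℂ) * Complex.I) ≠ 0 := by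
      simp [hj, Complex.I_ne_zero]
    rw [h1, intervalIntegral.integral_const_mul, integral_exp_mul_complex hc]
    have h2 : Complex.exp ((j : ℂ) * Complex.I * (2 * Real.pi)) = 1 := by
      rw [show ((j : ℂ) * Complex.I * (2 * Real.pi) : ℂ)
          = (j : ℤ) * (2 * Real.pi * Complex.I) by push_cast; ring]
      exact Complex.exp_int_mul_two_pi_mul_I j
    rw [show ((2 * Real.pi : ℝ) : ℂ) = ((2 * Real.pi : ℝ) : ℂ) from rfl] at *
    push_cast
    rw [h2]
    simp

noncomputable def kerK (r : ℝ) (m : ℤ) (ν : ℕ) (θ : ℝ) : ℂ :=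
  zf r θ ^ (-m) * (1 - (zf r θ)⁻¹) ^ (ν + 1)

noncomputable def cfun (x r : ℝ) (m : ℤ) (ν n : ℕ) (θ : ℝ) : ℂ :=
  (lagPoly n x : ℂ) * zf r θ ^ n * kerK r m ν θ

noncomputable def Gfun (x r : ℝ) (m : ℤ) (ν : ℕ) (θ : ℝ) : ℂ :=
  ((1 - zf r θ)⁻¹ * Complex.exp (-(x:ℂ) * zf r θ * (1 - zf r θ)⁻¹)) * kerK r m ν θ

lemma continuous_kerK (hr : 0 < r) (m : ℤ) (ν : ℕ) : Continuous (kerK r m ν) := by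
  have h : kerK r m ν = fun θ : ℝ =>
      ((r : ℂ) ^ (-m) * Complex.exp ((((-m : ℤ) : ℂ) * Complex.I) * θ))
        * (1 - (zf r θ)⁻¹) ^ (ν + 1) :=
    funext fun θ => by rw [kerK, zf_zpow hr]
  rw [h]
  refine Continuous.mul ?_ ?_
  · exact continuous_const.mul (Complex.continuous_exp.comp
      (continuous_const.mul Complex.continuous_ofReal))
  · exact (continuous_const.sub (continuous_zf.inv₀ (zf_ne_zero hr))).pow _

lemma continuous_cfun (hr : 0 < r) (x : ℝ) (m : ℤ) (ν n : ℕ) :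
    Continuous (cfun x r m ν n) := by
  unfold cfun
  exact (continuous_const.mul (continuous_zf.pow n)).mul (continuous_kerK hr m ν)

lemma norm_kerK_le (hr0 : 0 < r) (m : ℤ) (ν : ℕ) (θ : ℝ) :
    ‖kerK r m ν θ‖ ≤ r ^ (-m) * (1 + r⁻¹) ^ (ν + 1) := by
  rw [kerK, norm_mul, norm_zpow, norm_pow, norm_zf hr0.le]
  have h1 : ‖1 - (zf r θ)⁻¹‖ ≤ 1 + r⁻¹ := by
    refine (norm_sub_le _ _).trans ?_
    rw [norm_one, norm_inv, norm_zf hr0.le]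
  have h2 : (0:ℝ) < r ^ (-m) := zpow_pos hr0 _
  refine mul_le_mul_of_nonneg_left ?_ h2.le
  exact pow_le_pow_left₀ (norm_nonneg _) h1 _

end Circle

section Identity

open MeasureTheory intervalIntegral

variable {r : ℝ}

lemma integral_Gfun (x : ℝ) (m : ℤ) (ν : ℕ) (hx : 0 ≤ x) (hr0 : 0 < r) (hr1 : r < 1) :
    ∫ θ in (0:ℝ)..(2 * Real.pi), Gfun x r m ν θ
      = (2 * Real.pi : ℂ) * ∑ k ∈ Finset.range (ν + 2),
          ((ν+1).choose k : ℂ) * (-1) ^ k *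
            (if 0 ≤ m + (k:ℤ) then ((lagPoly (m + (k:ℤ)).toNat x : ℝ) : ℂ) else 0) := by
  have hnz : ∀ θ : ℝ, zf r θ ≠ 0 := zf_ne_zero hr0
  have hzlt : ∀ θ : ℝ, ‖zf r θ‖ < 1 := fun θ => by rw [norm_zf hr0.le]; exact hr1
  have hpi : (0:ℝ) ≤ 2 * Real.pi := by positivity
  have hcontj : ∀ j : ℤ, Continuous (fun θ : ℝ => zf r θ ^ j) := by
    intro j
    rw [funext (zf_zpow hr0 j)]
    exact continuous_const.mul (Complex.continuous_exp.comp
      (continuous_const.mul Complex.continuous_ofReal))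
  -- expansion of cfun as a finite sum of zpow monomials
  have hexpand : ∀ (n : ℕ) (θ : ℝ), cfun x r m ν n θ
      = ∑ k ∈ Finset.range (ν + 2),
          (lagPoly n x : ℂ) * ((ν+1).choose k : ℂ) * (-1) ^ k * zf r θ ^ ((n:ℤ) - m - k) := by
    intro n θ
    rw [cfun, kerK]
    rw [sub_eq_add_neg (1:ℂ), add_comm (1:ℂ), add_pow]
    rw [Finset.mul_sum, Finset.mul_sum]
    refine Finset.sum_congr rfl fun k hk => ?_
    have hzp : zf r θ ^ (n:ℤ) * (zf r θ ^ (-m) * ((zf r θ)⁻¹) ^ k)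
        = zf r θ ^ ((n:ℤ) - m - k) := by
      rw [inv_pow, ← zpow_natCast (zf r θ) k, ← zpow_neg, ← zpow_add₀ (hnz θ),
        ← zpow_add₀ (hnz θ)]
      congr 1
      ring
    rw [← hzp, zpow_natCast]
    generalize zf r θ ^ (-m) = A
    ring
  -- value of each elementary integral
  have hint : ∀ n : ℕ, (∫ θ in (0:ℝ)..(2 * Real.pi), cfun x r m ν n θ)
      = ∑ k ∈ Finset.range (ν + 2), (lagPoly n x : ℂ) * ((ν+1).choose k : ℂ) * (-1) ^ k *
          (if (n:ℤ) - m - k = 0 then (2 * Real.pi : ℂ) else 0) := by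
    intro n
    have h1 : (∫ θ in (0:ℝ)..(2 * Real.pi), cfun x r m ν n θ)
        = ∫ θ in (0:ℝ)..(2 * Real.pi), ∑ k ∈ Finset.range (ν + 2),
            (lagPoly n x : ℂ) * ((ν+1).choose k : ℂ) * (-1) ^ k
              * zf r θ ^ ((n:ℤ) - m - k) := by
      apply intervalIntegral.integral_congr
      intro θ _
      exact hexpand n θ
    rw [h1, intervalIntegral.integral_finset_sum]
    · refine Finset.sum_congr rfl fun k hk => ?_
      rw [intervalIntegral.integral_const_mul, integral_zf_zpow hr0]
    · intro k hk
      exact (continuous_const.mul (hcontj _)).intervalIntegrable _ _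
  -- swap sum and integral
  set μ : Measure ℝ := volume.restrict (Set.Ioc (0:ℝ) (2 * Real.pi)) with hμ
  have hG : ∀ θ : ℝ, HasSum (fun n => cfun x r m ν n θ) (Gfun x r m ν θ) := fun θ =>
    (hasSum_lagPoly_mul_pow x (hzlt θ)).mul_right (kerK r m ν θ)
  have hInt : ∀ n : ℕ, Integrable (cfun x r m ν n) μ := fun n =>
    (continuous_cfun hr0 x m ν n).integrableOn_Ioc
  set Kc : ℝ := r ^ (-m) * (1 + r⁻¹) ^ (ν + 1) with hKc
  have hbound : ∀ (n : ℕ) (θ : ℝ), ‖cfun x r m ν n θ‖ ≤ lagPoly n (-x) * r ^ n * Kc := by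
    intro n θ
    rw [cfun, norm_mul, norm_mul, norm_pow, norm_zf hr0.le, Complex.norm_real,
      Real.norm_eq_abs]
    have h0 : (0:ℝ) ≤ r ^ n := by positivity
    have hlag : (0:ℝ) ≤ lagPoly n (-x) := (abs_nonneg _).trans (abs_lagPoly_le hx n)
    have h2 : |lagPoly n x| * r ^ n ≤ lagPoly n (-x) * r ^ n :=
      mul_le_mul_of_nonneg_right (abs_lagPoly_le hx n) h0
    exact mul_le_mul h2 (norm_kerK_le hr0 m ν θ) (norm_nonneg _) (mul_nonneg hlag h0)
  have hrn : ‖((r:ℝ) : ℂ)‖ < 1 := by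
    rw [Complex.norm_real, Real.norm_eq_abs, abs_of_nonneg hr0.le]; exact hr1
  have hMsum : Summable (fun n : ℕ => lagPoly n (-x) * r ^ n) := by
    have h := summable_lagPoly_mul_pow (-x) hrn
    rw [← Complex.summable_ofReal]
    refine h.congr fun n => ?_
    push_cast
    ring
  have hmeas : (μ Set.univ).toReal = 2 * Real.pi := by
    rw [hμ, Measure.restrict_apply_univ, Real.volume_Ioc, ENNReal.toReal_ofReal (by linarith)]
    ring
  have hnorm_int_le : ∀ n : ℕ,
      (∫ θ, ‖cfun x r m ν n θ‖ ∂μ) ≤ lagPoly n (-x) * r ^ n * Kc * (2 * Real.pi) := by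
    intro n
    have h1 : (∫ θ, ‖cfun x r m ν n θ‖ ∂μ)
        ≤ ∫ _ : ℝ, (lagPoly n (-x) * r ^ n * Kc) ∂μ :=
      integral_mono (hInt n).norm (integrable_const _) (fun θ => hbound n θ)
    rwa [MeasureTheory.integral_const, measureReal_def, hmeas, smul_eq_mul, mul_comm] at h1
  have hSummableInt : Summable (fun n : ℕ => ∫ θ, ‖cfun x r m ν n θ‖ ∂μ) :=
    Summable.of_nonneg_of_le (fun n => integral_nonneg fun θ => norm_nonneg _)
      hnorm_int_le (((hMsum.mul_right Kc).mul_right (2 * Real.pi)))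
  have hswap := MeasureTheory.integral_tsum_of_summable_integral_norm
    (F := fun n => cfun x r m ν n) hInt hSummableInt
  -- identify both sides
  have hL : (∫ θ, (∑' n : ℕ, cfun x r m ν n θ) ∂μ)
      = ∫ θ in (0:ℝ)..(2 * Real.pi), Gfun x r m ν θ := by
    rw [intervalIntegral.integral_of_le hpi]
    apply MeasureTheory.integral_congr_ae
    filter_upwards with θ
    exact (hG θ).tsum_eq
  have hmuint : ∀ n : ℕ, (∫ θ, cfun x r m ν n θ ∂μ)
      = ∫ θ in (0:ℝ)..(2 * Real.pi), cfun x r m ν n θ := by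
    intro n
    rw [intervalIntegral.integral_of_le hpi]
  rw [hL] at hswap
  rw [← hswap]
  -- compute the tsum of integrals
  have hre : (fun n : ℕ => ∫ θ, cfun x r m ν n θ ∂μ)
      = fun n : ℕ => ∑ k ∈ Finset.range (ν + 2),
          (lagPoly n x : ℂ) * ((ν+1).choose k : ℂ) * (-1) ^ k *
            (if (n:ℤ) - m - k = 0 then (2 * Real.pi : ℂ) else 0) :=
    funext fun n => by rw [hmuint n, hint n]
  rw [hre]
  have hsumk : ∀ k ∈ Finset.range (ν + 2), Summable (fun n : ℕ =>
      (lagPoly n x : ℂ) * ((ν+1).choose k : ℂ) * (-1) ^ k *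
        (if (n:ℤ) - m - k = 0 then (2 * Real.pi : ℂ) else 0)) := by
    intro k _
    apply summable_of_ne_finset_zero (s := {(m + (k:ℤ)).toNat})
    intro n hn
    simp only [Finset.mem_singleton] at hn
    rw [if_neg (by omega), mul_zero]
  rw [Summable.tsum_finsetSum hsumk]
  rw [Finset.mul_sum]
  refine Finset.sum_congr rfl fun k hk => ?_
  by_cases hmk : 0 ≤ m + (k:ℤ)
  · rw [tsum_eq_single ((m + (k:ℤ)).toNat) (fun n hn => by
      rw [if_neg (by omega), mul_zero])]
    rw [if_pos (by omega), if_pos hmk]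
    ring
  · have hzero : ∀ n : ℕ, (lagPoly n x : ℂ) * ((ν+1).choose k : ℂ) * (-1) ^ k *
        (if (n:ℤ) - m - k = 0 then (2 * Real.pi : ℂ) else 0) = 0 := by
      intro n
      rw [if_neg (by omega), mul_zero]
    rw [tsum_congr hzero, tsum_zero, if_neg hmk, mul_zero, mul_zero]

end Identity

section Bound

variable {r : ℝ}

lemma re_aux {w : ℂ} (hw : ‖w‖ ≤ 1) (h1 : (1:ℂ) - w ≠ 0) :
    (-1/2 : ℝ) ≤ (w * (1 - w)⁻¹).re := by
  have hid : w * (1 - w)⁻¹ = -1 + (1 - w)⁻¹ := by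
    field_simp
    ring
  rw [hid]
  have hN : 0 < Complex.normSq (1 - w) := Complex.normSq_pos.mpr h1
  have hsq : Complex.normSq w ≤ 1 := by
    rw [Complex.normSq_eq_norm_sq]
    nlinarith [norm_nonneg w]
  rw [Complex.add_re, Complex.neg_re, Complex.one_re, Complex.inv_re]
  have h2 : (1:ℝ)/2 ≤ (1 - w).re / Complex.normSq (1 - w) := by
    rw [le_div_iff₀ hN]
    have e1 : Complex.normSq (1 - w) = 1 - 2 * w.re + Complex.normSq w := by
      simp [Complex.normSq_apply, Complex.sub_re, Complex.sub_im]
      ring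
    have e2 : Complex.normSq w = w.re ^ 2 + w.im ^ 2 := by
      simp [Complex.normSq_apply]; ring
    rw [Complex.sub_re, Complex.one_re]
    nlinarith
  linarith

lemma norm_Gfun_le (x : ℝ) (hx : 0 ≤ x) (m : ℤ) (ν : ℕ) (hr0 : 0 < r) (hr1 : r < 1)
    (θ : ℝ) : ‖Gfun x r m ν θ‖ ≤ Real.exp (x/2) * (1+r)^ν * r ^ (-(m + ν + 1)) := by
  set w : ℂ := zf r θ with hw
  have hwne : w ≠ 0 := zf_ne_zero hr0 θ
  have h1w : (1:ℂ) - w ≠ 0 := one_sub_zf_ne_zero hr0.le hr1 θ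
  have hnw : ‖w‖ = r := norm_zf hr0.le θ
  have hnv : ‖(1:ℂ) - w‖ ≠ 0 := norm_ne_zero_iff.mpr h1w
  set X : ℝ := ‖(1:ℂ) - w‖ with hX
  have hXpos : 0 < X := (norm_pos_iff).mpr h1w
  have hker2 : ‖(1:ℂ) - w⁻¹‖ = X * r⁻¹ := by
    have hker : (1 : ℂ) - w⁻¹ = (w - 1) * w⁻¹ := by field_simp
    rw [hker, norm_mul, norm_inv, hnw, norm_sub_rev]
  -- norm of Gfun
  have e1 : ‖Gfun x r m ν θ‖
      = X⁻¹ * Real.exp ((-(x:ℂ) * w * (1 - w)⁻¹).re) * (r ^ (-m) * (X * r⁻¹) ^ (ν+1)) := by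
    rw [Gfun, kerK, norm_mul, norm_mul, norm_mul, norm_inv, norm_zpow, norm_pow, hker2,
      ← hw, hnw, ← hX, Complex.norm_exp]
  rw [e1]
  -- real part bound
  have hre : ((-(x:ℂ) * w * (1 - w)⁻¹).re) ≤ x / 2 := by
    have hwle : ‖w‖ ≤ 1 := by rw [hnw]; exact hr1.le
    have h := re_aux hwle h1w
    have e2 : (-(x:ℂ) * w * (1 - w)⁻¹) = ((-x : ℝ) : ℂ) * (w * (1 - w)⁻¹) := by
      push_cast; ring
    rw [e2, Complex.re_ofReal_mul]
    nlinarith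
  -- algebraic rearrangement
  have e3 : X⁻¹ * Real.exp ((-(x:ℂ) * w * (1 - w)⁻¹).re) * (r ^ (-m) * (X * r⁻¹) ^ (ν+1))
      = Real.exp ((-(x:ℂ) * w * (1 - w)⁻¹).re) * X ^ ν * (r ^ (-m) * (r⁻¹) ^ (ν+1)) := by
    rw [mul_pow, pow_succ X ν]
    field_simp
  rw [e3]
  have e4 : (r : ℝ) ^ (-m) * (r⁻¹) ^ (ν+1) = r ^ (-(m + ν + 1)) := by
    rw [inv_pow, ← zpow_natCast r (ν+1), ← zpow_neg, ← zpow_add₀ hr0.ne']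
    congr 1
    push_cast
    ring
  rw [e4]
  have hXle : X ≤ 1 + r := by
    refine (norm_sub_le _ _).trans ?_
    rw [norm_one, hnw]
  have hzp : (0:ℝ) < r ^ (-(m + ν + 1)) := zpow_pos hr0 _
  have h5 : Real.exp ((-(x:ℂ) * w * (1 - w)⁻¹).re) ≤ Real.exp (x/2) := Real.exp_le_exp.mpr hre
  have h6 : X ^ ν ≤ (1+r) ^ ν := pow_le_pow_left₀ hXpos.le hXle ν
  calc Real.exp ((-(x:ℂ) * w * (1 - w)⁻¹).re) * X ^ ν * r ^ (-(m + ν + 1))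
      ≤ Real.exp (x/2) * (1+r) ^ ν * r ^ (-(m + ν + 1)) := by
        have := mul_le_mul (mul_le_mul h5 h6 (by positivity) (Real.exp_pos _).le)
          (le_refl (r ^ (-(m + ν + 1)))) hzp.le (by positivity)
        exact this

end Bound

lemma abs_Sl_le (x : ℝ) (hx : 0 ≤ x) (m : ℤ) (ν : ℕ) :
    |∑ k ∈ Finset.range (ν + 2), ((ν+1).choose k : ℝ) * (-1)^k *
        (if 0 ≤ m + (k:ℤ) then lagPoly (m + (k:ℤ)).toNat x else 0)|
      ≤ Real.exp (x/2) * 2 ^ ν := by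
  set S : ℝ := ∑ k ∈ Finset.range (ν + 2), ((ν+1).choose k : ℝ) * (-1)^k *
      (if 0 ≤ m + (k:ℤ) then lagPoly (m + (k:ℤ)).toNat x else 0) with hS
  have hpi : (0:ℝ) < 2 * Real.pi := by positivity
  have key : ∀ r : ℝ, r ∈ Set.Ioo (0:ℝ) 1 →
      |S| ≤ Real.exp (x/2) * (1+r)^ν * r ^ (-(m + ν + 1)) := by
    intro r hr
    have hid := integral_Gfun x m ν hx hr.1 hr.2
    have hb := intervalIntegral.norm_integral_le_of_norm_le_const
      (C := Real.exp (x/2) * (1+r)^ν * r ^ (-(m + ν + 1)))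
      (f := Gfun x r m ν) (a := (0:ℝ)) (b := 2 * Real.pi)
      (fun θ _ => norm_Gfun_le x hx m ν hr.1 hr.2 θ)
    rw [hid] at hb
    have hcast : (∑ k ∈ Finset.range (ν + 2), ((ν+1).choose k : ℂ) * (-1)^k *
        (if 0 ≤ m + (k:ℤ) then ((lagPoly (m + (k:ℤ)).toNat x : ℝ) : ℂ) else 0)) = (S : ℂ) := by
      rw [hS]
      push_cast [apply_ite (fun y : ℝ => (y : ℂ))]
      exact Finset.sum_congr rfl fun k _ => by ring
    rw [hcast] at hb
    have hb2 : 2 * Real.pi * |S| ≤ Real.exp (x/2) * (1+r)^ν * r ^ (-(m + ν + 1)) *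
        (2 * Real.pi) := by
      have : ‖(2 * (Real.pi:ℂ)) * (S : ℂ)‖ = 2 * Real.pi * |S| := by
        rw [norm_mul]
        have : ‖(2 * (Real.pi:ℂ))‖ = 2 * Real.pi := by
          rw [show (2 * (Real.pi:ℂ)) = ((2 * Real.pi : ℝ) : ℂ) by push_cast; ring,
            Complex.norm_real, Real.norm_eq_abs, abs_of_pos hpi]
        rw [this, Complex.norm_real, Real.norm_eq_abs]
      rw [this] at hb
      have habs : |2 * Real.pi - 0| = 2 * Real.pi := by
        rw [sub_zero, abs_of_pos hpi]
      rwa [habs] at hb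
    have := le_of_mul_le_mul_right (by linarith : |S| * (2 * Real.pi)
        ≤ Real.exp (x/2) * (1+r)^ν * r ^ (-(m + ν + 1)) * (2 * Real.pi)) hpi
    exact this
  have hlim : Filter.Tendsto (fun r : ℝ => Real.exp (x/2) * (1+r)^ν * r ^ (-(m + ν + 1)))
      (nhdsWithin 1 (Set.Iio 1)) (nhds (Real.exp (x/2) * 2 ^ ν)) := by
    have hc : ContinuousAt (fun r : ℝ => Real.exp (x/2) * (1+r)^ν * r ^ (-(m + ν + 1)))
        (1 : ℝ) := by
      refine ContinuousAt.mul (ContinuousAt.mul continuousAt_const ?_) ?_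
      · exact ((continuous_const.add continuous_id).pow ν).continuousAt
      · exact continuousAt_zpow₀ (1:ℝ) _ (Or.inl one_ne_zero)
    have h2 := hc.tendsto.mono_left (nhdsWithin_le_nhds (s := Set.Iio (1:ℝ)))
    have e : Real.exp (x/2) * (1+(1:ℝ))^ν * (1:ℝ) ^ (-(m + ν + 1))
        = Real.exp (x/2) * 2 ^ ν := by
      rw [one_zpow]
      norm_num
    rwa [e] at h2
  refine ge_of_tendsto hlim ?_
  filter_upwards [Ioo_mem_nhdsLT_of_mem (by constructor <;> norm_num : (1:ℝ) ∈ Set.Ioc 0 1)]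
    with r hr using key r hr

/-! ### Final assembly -/

lemma lagFun_nonneg_t {t : ℝ} (ht : 0 ≤ t) (j : ℤ) :
    lagFun j t = if 0 ≤ j then Real.sqrt 2 * lagPoly j.toNat (2*t) * Real.exp (-t) else 0 := by
  unfold lagFun
  by_cases hj : 0 ≤ j
  · rw [if_pos hj, if_pos hj, Set.indicator_of_mem (by exact ht : t ∈ Set.Ici (0:ℝ))]
  · rw [if_neg hj, if_neg hj,
      Set.indicator_of_notMem (by exact not_lt.mpr ht : t ∉ Set.Iio (0:ℝ))]

lemma lagFun_neg_t {t : ℝ} (ht : t < 0) (j : ℤ) :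
    lagFun j t = -lagFun (-j - 1) (-t) := by
  unfold lagFun
  by_cases hj : 0 ≤ j
  · rw [if_pos hj, if_neg (by omega : ¬ (0:ℤ) ≤ -j - 1)]
    rw [Set.indicator_of_notMem (by exact not_le.mpr ht : t ∉ Set.Ici (0:ℝ)),
      Set.indicator_of_notMem (by simp; linarith : -t ∉ Set.Iio (0:ℝ))]
    simp
  · rw [if_neg hj, if_pos (by omega : (0:ℤ) ≤ -j - 1)]
    rw [Set.indicator_of_mem (by exact ht : t ∈ Set.Iio (0:ℝ)),
      Set.indicator_of_mem (by simp; linarith : -t ∈ Set.Ici (0:ℝ))]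
    rw [neg_neg, show 2 * -t = -(2*t) by ring]

lemma key_nonneg (ν : ℕ) (m : ℤ) {t : ℝ} (ht : 0 ≤ t) :
    |∑ k ∈ Finset.range (ν + 2), ((ν+1).choose k : ℝ) * (-1)^k * lagFun (m + (k:ℤ)) t|
      ≤ Real.sqrt 2 * 2 ^ ν := by
  have hsum : ∑ k ∈ Finset.range (ν + 2), ((ν+1).choose k : ℝ) * (-1)^k * lagFun (m + (k:ℤ)) t
      = (Real.sqrt 2 * Real.exp (-t)) *
        ∑ k ∈ Finset.range (ν + 2), ((ν+1).choose k : ℝ) * (-1)^k *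
          (if 0 ≤ m + (k:ℤ) then lagPoly (m + (k:ℤ)).toNat (2*t) else 0) := by
    rw [Finset.mul_sum]
    refine Finset.sum_congr rfl fun k _ => ?_
    rw [lagFun_nonneg_t ht]
    by_cases h : 0 ≤ m + (k:ℤ)
    · rw [if_pos h, if_pos h]; ring
    · rw [if_neg h, if_neg h]; ring
  rw [hsum, abs_mul, abs_of_pos (by positivity : (0:ℝ) < Real.sqrt 2 * Real.exp (-t))]
  have h2 := abs_Sl_le (2*t) (by linarith) m ν
  have hexp : Real.exp (-t) * Real.exp (2*t/2) = 1 := by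
    rw [← Real.exp_add]; norm_num
  calc Real.sqrt 2 * Real.exp (-t) *
        |∑ k ∈ Finset.range (ν + 2), ((ν+1).choose k : ℝ) * (-1)^k *
          (if 0 ≤ m + (k:ℤ) then lagPoly (m + (k:ℤ)).toNat (2*t) else 0)|
      ≤ Real.sqrt 2 * Real.exp (-t) * (Real.exp (2*t/2) * 2 ^ ν) := by
        refine mul_le_mul_of_nonneg_left h2 (by positivity)
    _ = (Real.exp (-t) * Real.exp (2*t/2)) * (Real.sqrt 2 * 2 ^ ν) := by ring
    _ = Real.sqrt 2 * 2 ^ ν := by rw [hexp, one_mul]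

lemma key_neg (ν : ℕ) (m : ℤ) {t : ℝ} (ht : t < 0) :
    |∑ k ∈ Finset.range (ν + 2), ((ν+1).choose k : ℝ) * (-1)^k * lagFun (m + (k:ℤ)) t|
      ≤ Real.sqrt 2 * 2 ^ ν := by
  have hrefl : ∑ k ∈ Finset.range (ν + 2), ((ν+1).choose k : ℝ) * (-1)^k * lagFun (m + (k:ℤ)) t
      = (-1) * (-1:ℝ)^(ν+1) * ∑ k ∈ Finset.range (ν + 2), ((ν+1).choose k : ℝ) * (-1)^k *
          lagFun ((-m - ν - 2) + (k:ℤ)) (-t) := by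
    rw [Finset.mul_sum]
    rw [← Finset.sum_range_reflect
      (fun k => ((ν+1).choose k : ℝ) * (-1)^k * lagFun (m + (k:ℤ)) t) (ν+2)]
    refine Finset.sum_congr rfl fun k hk => ?_
    have hk' : k ≤ ν + 1 := by
      have := Finset.mem_range.mp hk; omega
    have hidx : ν + 2 - 1 - k = ν + 1 - k := by omega
    rw [hidx]
    have hc : (((ν + 1 - k : ℕ)) : ℤ) = (ν:ℤ) + 1 - k := by omega
    have hchoose : ((ν+1).choose (ν + 1 - k) : ℝ) = ((ν+1).choose k : ℝ) := by
      rw [Nat.choose_symm hk']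
    have hlag : lagFun (m + ((ν + 1 - k : ℕ) : ℤ)) t
        = -lagFun ((-m - ν - 2) + (k:ℤ)) (-t) := by
      rw [lagFun_neg_t ht]
      congr 1
      rw [hc]
      ring
    have hsign : (-1:ℝ)^(ν + 1 - k) = (-1:ℝ)^(ν+1) * (-1:ℝ)^k := by
      have h2 : ((-1:ℝ)^k) * ((-1:ℝ)^k) = 1 := by
        rw [← mul_pow]; norm_num
      calc (-1:ℝ)^(ν + 1 - k) = (-1:ℝ)^(ν + 1 - k) * (((-1:ℝ)^k) * ((-1:ℝ)^k)) := by
            rw [h2, mul_one]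
        _ = ((-1:ℝ)^(ν + 1 - k) * (-1:ℝ)^k) * (-1:ℝ)^k := by ring
        _ = (-1:ℝ)^(ν+1) * (-1:ℝ)^k := by
            rw [← pow_add, Nat.sub_add_cancel hk']
    rw [hchoose, hlag, hsign]
    ring
  rw [hrefl, abs_mul, abs_mul, abs_pow]
  simp only [abs_neg, abs_one, one_pow, mul_one, one_mul]
  exact key_nonneg ν (-m - ν - 2) (by linarith : (0:ℝ) ≤ -t)

/-- Uniform bound on the Matérn–Laguerre functions. -/
theorem maternLag_abs_le (ν : ℕ) (m : ℤ) (t : ℝ) :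
    |maternLag ν m t| ≤
      2 ^ ν * (Nat.factorial ν : ℝ) / Real.sqrt (Nat.factorial (2 * ν)) := by
  have hkey : |∑ k ∈ Finset.range (ν + 2),
      (Nat.choose (ν + 1) k : ℝ) * (-1) ^ k * lagFun (m + (k : ℤ)) t|
      ≤ Real.sqrt 2 * 2 ^ ν := by
    rcases le_or_gt 0 t with ht | ht
    · exact key_nonneg ν m ht
    · exact key_neg ν m ht
  rw [maternLag, abs_mul,
    abs_of_nonneg (by positivity :
      (0:ℝ) ≤ (1 / Real.sqrt 2) * ((Nat.factorial ν : ℝ) / Real.sqrt (Nat.factorial (2 * ν))))]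
  have hs2 : Real.sqrt 2 ≠ 0 := by positivity
  have hsf : Real.sqrt (Nat.factorial (2 * ν)) ≠ 0 := by
    have : (0:ℝ) < (Nat.factorial (2 * ν) : ℝ) := by
      exact_mod_cast Nat.factorial_pos _
    positivity
  calc (1 / Real.sqrt 2) * ((Nat.factorial ν : ℝ) / Real.sqrt (Nat.factorial (2 * ν))) *
        |∑ k ∈ Finset.range (ν + 2),
          (Nat.choose (ν + 1) k : ℝ) * (-1) ^ k * lagFun (m + (k : ℤ)) t|
      ≤ (1 / Real.sqrt 2) * ((Nat.factorial ν : ℝ) / Real.sqrt (Nat.factorial (2 * ν))) *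
        (Real.sqrt 2 * 2 ^ ν) := by
        refine mul_le_mul_of_nonneg_left hkey (by positivity)
    _ = 2 ^ ν * (Nat.factorial ν : ℝ) / Real.sqrt (Nat.factorial (2 * ν)) := by
        field_simp
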